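/- For every real t > 0, the following identity holds: (π/4) · ∑_{n∈ℤ} (-1)^n (2n+1) · exp(-(2n+1)²π²t/8) = (1/√(2πt³)) · ∑_{n∈ℤ} (-1)^n (2n+1) · exp(-(2n+1)²/(2t)). -/

import Mathlib

open Real

section AuxJacobi
open Complex

private lemma theta2_symm (σ : ℂ) :
    jacobiTheta₂ ((1 - σ) / 2) σ = jacobiTheta₂ ((1 + σ) / 2) σ := by
  rw [show ((1 - σ) / 2 : ℂ) = -((σ - 1) / 2) by ring, jacobiTheta₂_neg_left,
    show ((σ - 1) / 2 : ℂ) = (σ - 1) / 2 by ring, ← jacobiTheta₂_add_left ((σ - 1) / 2) σ,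
    show ((σ - 1) / 2 + 1 : ℂ) = (1 + σ) / 2 by ring]

private lemma theta2_half_eq_zero (σ : ℂ) : jacobiTheta₂ ((1 + σ) / 2) σ = 0 := by
  have h1 : jacobiTheta₂ ((1 + σ) / 2) σ = jacobiTheta₂ ((1 - σ) / 2 + σ) σ := by
    congr 1; ring
  rw [jacobiTheta₂_add_left', theta2_symm] at h1
  have he : Complex.exp (-↑π * I * (σ + 2 * ((1 - σ) / 2))) = -1 := by
    rw [show (-↑π * I * (σ + 2 * ((1 - σ) / 2)) : ℂ) = -(↑π * I) by ring, Complex.exp_neg,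
      Complex.exp_pi_mul_I]
    norm_num
  rw [he] at h1
  have h2 : (2 : ℂ) * jacobiTheta₂ ((1 + σ) / 2) σ = 0 := by linear_combination h1
  simpa using h2

private lemma theta2'_flip (σ : ℂ) :
    jacobiTheta₂' ((1 - σ) / 2) σ = -jacobiTheta₂' ((1 + σ) / 2) σ := by
  rw [show ((1 - σ) / 2 : ℂ) = -((σ - 1) / 2) by ring, jacobiTheta₂'_neg_left,
    ← jacobiTheta₂'_add_left ((σ - 1) / 2) σ,
    show ((σ - 1) / 2 + 1 : ℂ) = (1 + σ) / 2 by ring]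

private lemma keyA {σ : ℂ} (hσ : 0 < σ.im) :
    ↑π * I * Complex.exp (-(↑π * I * σ) / 4) *
      ∑' n : ℤ, (-1 : ℂ) ^ n * (2 * (n : ℂ) + 1) * Complex.exp (↑π * I * σ * ((n : ℂ) + 1 / 2) ^ 2)
    = jacobiTheta₂' ((1 + σ) / 2) σ := by
  have hs1 := (summable_jacobiTheta₂'_term_iff ((1 + σ) / 2) σ).mpr hσ
  have hs2 := (summable_jacobiTheta₂_term_iff ((1 + σ) / 2) σ).mpr hσ
  rw [← tsum_mul_left]
  have hrhs : jacobiTheta₂' ((1 + σ) / 2) σ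
      = ∑' n : ℤ, (jacobiTheta₂'_term n ((1 + σ) / 2) σ
          + ↑π * I * jacobiTheta₂_term n ((1 + σ) / 2) σ) := by
    rw [Summable.tsum_add hs1 (hs2.mul_left _), tsum_mul_left]
    have : (∑' n : ℤ, jacobiTheta₂_term n ((1 + σ) / 2) σ) = jacobiTheta₂ ((1 + σ) / 2) σ := rfl
    rw [this, theta2_half_eq_zero, mul_zero, add_zero]
    rfl
  rw [hrhs]
  refine tsum_congr fun n => ?_
  have hneg : ((-1 : ℂ)) ^ n = Complex.exp ((n : ℂ) * (↑π * I)) := by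
    rw [Complex.exp_int_mul, Complex.exp_pi_mul_I]
  have hE : (n : ℂ) * (↑π * I) + (↑π * I * σ * ((n : ℂ) + 1 / 2) ^ 2 + -(↑π * I * σ) / 4)
      = 2 * ↑π * I * (n : ℂ) * ((1 + σ) / 2) + ↑π * I * (n : ℂ) ^ 2 * σ := by ring
  calc ↑π * I * Complex.exp (-(↑π * I * σ) / 4) *
        ((-1 : ℂ) ^ n * (2 * (n : ℂ) + 1) * Complex.exp (↑π * I * σ * ((n : ℂ) + 1 / 2) ^ 2))
      = ↑π * I * (2 * (n : ℂ) + 1) * (Complex.exp ((n : ℂ) * (↑π * I)) *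
          (Complex.exp (↑π * I * σ * ((n : ℂ) + 1 / 2) ^ 2)
            * Complex.exp (-(↑π * I * σ) / 4))) := by rw [hneg]; ring
    _ = ↑π * I * (2 * (n : ℂ) + 1) *
          Complex.exp (2 * ↑π * I * (n : ℂ) * ((1 + σ) / 2) + ↑π * I * (n : ℂ) ^ 2 * σ) := by
        rw [← Complex.exp_add, ← Complex.exp_add, hE]
    _ = jacobiTheta₂'_term n ((1 + σ) / 2) σ + ↑π * I * jacobiTheta₂_term n ((1 + σ) / 2) σ := by
        rw [jacobiTheta₂'_term, jacobiTheta₂_term]; ring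

end AuxJacobi

section MainProof
open Complex

/-- Modular identity for the density of the first exit time of Brownian motion from `(-1,1)`,
i.e. the derivative at `z = 0` of the first modular identity for `θ₁`. -/
theorem exit_time_density_modular (t : ℝ) (ht : 0 < t) :
    (π / 4) *
      ∑' n : ℤ, (-1 : ℝ) ^ n * (2 * (n : ℝ) + 1) *
        Real.exp (-(2 * (n : ℝ) + 1) ^ 2 * π ^ 2 * t / 8)
    = (1 / Real.sqrt (2 * π * t ^ 3)) *
      ∑' n : ℤ, (-1 : ℝ) ^ n * (2 * (n : ℝ) + 1) *
        Real.exp (-(2 * (n : ℝ) + 1) ^ 2 / (2 * t)) := by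
  set a : ℝ := π * t / 2 with ha_def
  have ha : 0 < a := by positivity
  set τ : ℂ := (a : ℂ) * I with hτ_def
  set τ' : ℂ := ((a⁻¹ : ℝ) : ℂ) * I with hτ'_def
  have hτim : 0 < τ.im := by simp [hτ_def, ha]
  have hτ'im : 0 < τ'.im := by simp [hτ'_def, ha]
  have hτ0 : τ ≠ 0 := by
    simp [hτ_def, Complex.I_ne_zero, Complex.ofReal_ne_zero, ne_of_gt ha]
  have hτ' : -1 / τ = τ' := by
    rw [hτ_def, hτ'_def, div_eq_iff (by simpa [hτ_def] using hτ0),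
      show ((a⁻¹ : ℝ) : ℂ) * I * ((a : ℂ) * I) = (((a⁻¹ : ℝ) : ℂ) * (a : ℂ)) * (I * I) by ring,
      Complex.I_mul_I, ← Complex.ofReal_mul, inv_mul_cancel₀ (ne_of_gt ha)]
    norm_num
  set S₁ : ℂ := ∑' n : ℤ, (-1 : ℂ) ^ n * (2 * (n : ℂ) + 1) *
      Complex.exp (↑π * I * τ * ((n : ℂ) + 1 / 2) ^ 2) with hS₁_def
  set S₂ : ℂ := ∑' n : ℤ, (-1 : ℂ) ^ n * (2 * (n : ℂ) + 1) *
      Complex.exp (↑π * I * τ' * ((n : ℂ) + 1 / 2) ^ 2) with hS₂_def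
  have hzdiv : ((1 + τ) / 2) / τ = (1 - τ') / 2 := by
    rw [← hτ']
    field_simp
    ring
  have hsqrt : (-I * τ) ^ (1 / 2 : ℂ) = ((Real.sqrt a : ℝ) : ℂ) := by
    have h1 : -I * τ = ((a : ℝ) : ℂ) := by
      rw [hτ_def, show (-I * ((a:ℂ) * I) : ℂ) = -(I*I) * a by ring, Complex.I_mul_I]; ring
    rw [h1, Real.sqrt_eq_rpow, Complex.ofReal_cpow ha.le]
    norm_num
  have hfe := jacobiTheta₂'_functional_equation ((1 + τ) / 2) τ
  rw [hτ', hzdiv, hsqrt, theta2'_flip, theta2_symm, theta2_half_eq_zero, mul_zero, sub_zero]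
    at hfe
  have h1 := keyA hτim
  have h2 := keyA hτ'im
  rw [← hS₁_def] at h1
  rw [← hS₂_def] at h2
  rw [hfe, ← h2] at h1
  -- exponential bookkeeping
  have hexpI : Complex.exp (-(↑π * I) / 2) = -I := by
    rw [show (-(↑π * I) / 2 : ℂ) = ((-(π/2) : ℝ) : ℂ) * I by push_cast; ring,
      Complex.exp_mul_I, ← Complex.ofReal_cos, ← Complex.ofReal_sin]
    simp
  have hexps : Complex.exp (-↑π * I * ((1 + τ)/2) ^ 2 / τ)
        * Complex.exp (-(↑π * I * τ') / 4) * Complex.exp ((↑π * I * τ) / 4) = -I := by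
    rw [← Complex.exp_add, ← Complex.exp_add, ← hexpI]
    congr 1
    rw [← hτ']
    field_simp
    ring
  have hinv : Complex.exp (-(↑π * I * τ) / 4) * Complex.exp ((↑π * I * τ) / 4) = 1 := by
    rw [← Complex.exp_add, show (-(↑π * I * τ) / 4 + ↑π * I * τ / 4 : ℂ) = 0 by ring,
      Complex.exp_zero]
  have h1' : ↑π * I * (Complex.exp (-(↑π * I * τ) / 4) * Complex.exp ((↑π * I * τ) / 4)) * S₁
      = 1 / ((Real.sqrt a : ℝ) : ℂ) / τ * -(↑π * I) *
        (Complex.exp (-↑π * I * ((1 + τ)/2) ^ 2 / τ) * Complex.exp (-(↑π * I * τ') / 4)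
          * Complex.exp ((↑π * I * τ) / 4)) * S₂ := by
    linear_combination Complex.exp ((↑π * I * τ) / 4) * h1
  rw [hinv, hexps] at h1'
  have hS : S₁ = ((1 / (a * Real.sqrt a) : ℝ) : ℂ) * S₂ := by
    have hπ0 : (π : ℂ) ≠ 0 := by
      simpa using Complex.ofReal_ne_zero.mpr Real.pi_ne_zero
    have hsa : ((Real.sqrt a : ℝ) : ℂ) ≠ 0 :=
      Complex.ofReal_ne_zero.mpr (ne_of_gt (Real.sqrt_pos.mpr ha))
    have ha0 : ((a : ℝ) : ℂ) ≠ 0 := Complex.ofReal_ne_zero.mpr (ne_of_gt ha)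
    rw [hτ_def] at h1'
    push_cast
    field_simp at h1' ⊢
    have h1'' : (π:ℂ) * (I*I) * (S₁ * ↑(Real.sqrt a) * ↑a) = (π:ℂ) * (I*I) * S₂ := by
      linear_combination (π:ℂ) * (I*I) * h1'
    rw [Complex.I_mul_I] at h1''
    have hc := mul_left_cancel₀ (show ((π:ℂ) * (-1)) ≠ 0 by simpa using hπ0) h1''
    linear_combination hc
  -- cast the real sums to the complex ones
  have hπ0c : ((π:ℝ) : ℂ) ≠ 0 := Complex.ofReal_ne_zero.mpr Real.pi_ne_zero
  have ht0c : ((t:ℝ) : ℂ) ≠ 0 := Complex.ofReal_ne_zero.mpr (ne_of_gt ht)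
  have hainv : (a⁻¹ : ℝ) = 2 / (π * t) := by
    rw [ha_def]
    field_simp
  have hcast1 : ((∑' n : ℤ, (-1 : ℝ) ^ n * (2 * (n : ℝ) + 1) *
      Real.exp (-(2 * (n : ℝ) + 1) ^ 2 * π ^ 2 * t / 8) : ℝ) : ℂ) = S₁ := by
    rw [Complex.ofReal_tsum, hS₁_def]
    refine tsum_congr fun n => ?_
    have hexpn : ((-(2 * (n : ℝ) + 1) ^ 2 * π ^ 2 * t / 8 : ℝ) : ℂ)
        = ↑π * I * τ * ((n : ℂ) + 1 / 2) ^ 2 := by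
      rw [hτ_def, ha_def]
      push_cast
      linear_combination (-(π:ℂ)^2 * (t:ℂ) / 2 * ((n:ℂ) + 1/2)^2) * Complex.I_mul_I
    rw [Complex.ofReal_mul, Complex.ofReal_exp, hexpn]
    congr 1
    push_cast
    ring
  have hcast2 : ((∑' n : ℤ, (-1 : ℝ) ^ n * (2 * (n : ℝ) + 1) *
      Real.exp (-(2 * (n : ℝ) + 1) ^ 2 / (2 * t)) : ℝ) : ℂ) = S₂ := by
    rw [Complex.ofReal_tsum, hS₂_def]
    refine tsum_congr fun n => ?_
    have hexpn : ((-(2 * (n : ℝ) + 1) ^ 2 / (2 * t) : ℝ) : ℂ)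
        = ↑π * I * τ' * ((n : ℂ) + 1 / 2) ^ 2 := by
      rw [hτ'_def, hainv]
      push_cast
      rw [div_eq_iff (by simpa using ht0c : (2 * (t:ℂ)) ≠ 0),
        show ((π:ℂ) * I * (2 / ((π:ℂ) * (t:ℂ)) * I) * ((n:ℂ) + 1 / 2) ^ 2 * (2 * (t:ℂ)) : ℂ)
          = (I * I) * ((π:ℂ) * (2 / ((π:ℂ) * (t:ℂ))) * ((n:ℂ) + 1 / 2) ^ 2 * (2 * (t:ℂ))) by ring,
        Complex.I_mul_I]
      field_simp
    rw [Complex.ofReal_mul, Complex.ofReal_exp, hexpn]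
    congr 1
    push_cast
    ring
  have hreal : (∑' n : ℤ, (-1 : ℝ) ^ n * (2 * (n : ℝ) + 1) *
      Real.exp (-(2 * (n : ℝ) + 1) ^ 2 * π ^ 2 * t / 8))
      = (1 / (a * Real.sqrt a)) * ∑' n : ℤ, (-1 : ℝ) ^ n * (2 * (n : ℝ) + 1) *
        Real.exp (-(2 * (n : ℝ) + 1) ^ 2 / (2 * t)) := by
    have h := hS
    rw [← hcast1, ← hcast2] at h
    exact_mod_cast h
  -- final real arithmetic
  have hA : a * Real.sqrt a = Real.sqrt (a ^ 3) := by
    rw [show a ^ 3 = a ^ 2 * a by ring, Real.sqrt_mul (sq_nonneg a), Real.sqrt_sq ha.le]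
  have hprod : Real.sqrt (2 * π * t ^ 3) * (π / 4 * (1 / (a * Real.sqrt a))) = 1 := by
    have h4 : (4 : ℝ) = Real.sqrt 16 := by
      rw [show (16:ℝ) = 4 ^ 2 by norm_num, Real.sqrt_sq (by norm_num : (0:ℝ) ≤ 4)]
    have hπs : Real.sqrt (π ^ 2) = π := Real.sqrt_sq pi_pos.le
    calc Real.sqrt (2 * π * t ^ 3) * (π / 4 * (1 / (a * Real.sqrt a)))
        = (Real.sqrt (2 * π * t ^ 3) * Real.sqrt (π ^ 2)) / (Real.sqrt 16 * Real.sqrt (a ^ 3)) := by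
          rw [hA, hπs, ← h4]; ring
      _ = Real.sqrt ((2 * π * t ^ 3) * π ^ 2) / Real.sqrt (16 * a ^ 3) := by
          rw [← Real.sqrt_mul (by positivity), ← Real.sqrt_mul (by norm_num)]
      _ = 1 := by
          rw [show (16:ℝ) * a ^ 3 = 2 * π * t ^ 3 * π ^ 2 by rw [ha_def]; ring]
          exact div_self (by positivity)
  have hs2π : 0 < Real.sqrt (2 * π * t ^ 3) := Real.sqrt_pos.mpr (by positivity)
  have hc2 : π / 4 * (1 / (a * Real.sqrt a)) = 1 / Real.sqrt (2 * π * t ^ 3) := by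
    rw [eq_div_iff (ne_of_gt hs2π)]
    linear_combination hprod
  rw [hreal, ← hc2]
  ring

end MainProof
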